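/- arXiv:1201.4075 — 3 statements merged into one kernel-verified Lean document; each statement's English description precedes it below -/
import Mathlib

section
/- Let K ⊆ {z ∈ ℂ : Re(z) < 0} be a nonempty compact convex set strictly contained in the open left half-plane. Then no function f ∈ Exp(K) is hypercyclic for T₁ on H(ℂ); in particular, every such f fails to have dense translation orbit in the topology of uniform convergence on compact sets. -/
open Filter Complex

/-- Support function `H_K(z) = sup { Re (z·u) : u ∈ K }` of a set `K ⊆ ℂ`. -/
noncomputable def suppFn (K : Set ℂ) (z : ℂ) : ℝ :=
  sSup ((fun u => (z * u).re) '' K)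

/-- The norm `‖f‖_{K,n} = sup_z |f z| · exp (−H_K z − |z|/n)`. -/
noncomputable def expNorm (K : Set ℂ) (n : ℕ) (f : ℂ → ℂ) : ℝ :=
  sSup (Set.range fun z : ℂ => ‖f z‖ * Real.exp (-(suppFn K z) - ‖z‖ / n))

/-- Membership in `Exp(K)`: `f` is entire and all the norms `‖f‖_{K,n}` are finite. -/
def MemExp (K : Set ℂ) (f : ℂ → ℂ) : Prop :=
  Differentiable ℂ f ∧ ∀ n : ℕ, 0 < n →
    BddAbove (Set.range fun z : ℂ => ‖f z‖ * Real.exp (-(suppFn K z) - ‖z‖ / n))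

open scoped Classical in
/-- Lower density of a set of natural numbers. -/
noncomputable def lowerDensity (A : Set ℕ) : ℝ :=
  liminf (fun N : ℕ =>
    (((Finset.range (N + 1)).filter (fun n => n ∈ A)).card : ℝ) / N) atTop

/-- Lower density of a discrete subset of `ℂ`. -/
noncomputable def ldensC (Λ : Set ℂ) : ℝ :=
  liminf (fun r : ℝ => (Nat.card {z : ℂ // z ∈ Λ ∧ ‖z‖ ≤ r} : ℝ) / r) atTop

/-- `f` is hypercyclic for the translation `T₁` on `Exp(K)`. -/
def HCExp (K : Set ℂ) (f : ℂ → ℂ) : Prop :=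
  MemExp K f ∧ ∀ g : ℂ → ℂ, MemExp K g → ∀ n : ℕ, 0 < n → ∀ ε > (0 : ℝ),
    ∃ k : ℕ, expNorm K n (fun z => f (z + (k : ℂ)) - g z) < ε

/-- `f` is frequently hypercyclic for the translation `T₁` on `Exp(K)`. -/
def FHCExp (K : Set ℂ) (f : ℂ → ℂ) : Prop :=
  MemExp K f ∧ ∀ g : ℂ → ℂ, MemExp K g → ∀ n : ℕ, 0 < n → ∀ ε > (0 : ℝ),
    0 < lowerDensity {k : ℕ | expNorm K n (fun z => f (z + (k : ℂ)) - g z) < ε}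

/-- `f` is hypercyclic (Birkhoff-universal) for `T₁` on `H(ℂ)`. -/
def HCEnt (f : ℂ → ℂ) : Prop :=
  Differentiable ℂ f ∧ ∀ g : ℂ → ℂ, Differentiable ℂ g → ∀ R > (0 : ℝ), ∀ ε > (0 : ℝ),
    ∃ k : ℕ, ∀ z : ℂ, ‖z‖ ≤ R → ‖f (z + (k : ℂ)) - g z‖ < ε

/-- `f` is frequently hypercyclic (frequently Birkhoff-universal) for `T₁` on `H(ℂ)`. -/
def FHCEnt (f : ℂ → ℂ) : Prop :=
  Differentiable ℂ f ∧ ∀ g : ℂ → ℂ, Differentiable ℂ g → ∀ R > (0 : ℝ), ∀ ε > (0 : ℝ),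
    0 < lowerDensity {k : ℕ | ∀ z : ℂ, ‖z‖ ≤ R → ‖f (z + (k : ℂ)) - g z‖ < ε}

/-- `f` is an entire function of (finite) exponential type. -/
def ExpType (f : ℂ → ℂ) : Prop :=
  Differentiable ℂ f ∧ ∃ C τ : ℝ, ∀ z : ℂ, ‖f z‖ ≤ C * Real.exp (τ * ‖z‖)

/-- The indicator function `h_f(θ) = limsup_{r→∞} log |f(r e^{iθ})| / r`. -/
noncomputable def indicatorFn (f : ℂ → ℂ) (θ : ℝ) : ℝ :=
  limsup (fun r : ℝ => Real.log ‖f ((r : ℂ) * Complex.exp (θ * Complex.I))‖ / r) atTop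

/-- **Remark 4 (first part).** If `K` is strictly contained in the open left half-plane,
no function of `Exp(K)` is hypercyclic for `T₁` on `H(ℂ)`. -/
theorem stmt10 (K : Set ℂ) (hne : K.Nonempty) (hKc : IsCompact K) (hKconv : Convex ℝ K)
    (hK : K ⊆ {z : ℂ | z.re < 0})
    (f : ℂ → ℂ) (hf : MemExp K f) : ¬ HCEnt f := by
  intro hHC
  obtain ⟨u₀, hu₀K, hmax⟩ := hKc.exists_isMaxOn hne Complex.continuous_re.continuousOn
  have hδ : 0 < -u₀.re := by have := hK hu₀K; simp only [Set.mem_setOf_eq] at this; linarith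
  obtain ⟨n, hn⟩ := exists_nat_gt (1 / (-u₀.re))
  have hn0 : 0 < n := by
    rcases Nat.eq_zero_or_pos n with h | h
    · exfalso
      subst h
      push_cast at hn
      have : (0:ℝ) < 1 / -u₀.re := by positivity
      linarith
    · exact h
  have hnR : (0:ℝ) < n := by exact_mod_cast hn0
  have h1n : 1 / (n:ℝ) ≤ -u₀.re := by
    rw [div_le_iff₀ hnR]
    rw [div_lt_iff₀ hδ] at hn
    nlinarith
  obtain ⟨M, hM⟩ := hf.2 n hn0
  have hMnn : 0 ≤ M := le_trans (by positivity) (hM (Set.mem_range_self (0:ℂ)))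
  have hbound : ∀ k : ℕ, ‖f k‖ ≤ M := by
    intro k
    have h1 : ‖f k‖ * Real.exp (-(suppFn K k) - ‖(k:ℂ)‖ / n) ≤ M :=
      hM (Set.mem_range_self (k:ℂ))
    have h2 : suppFn K (k:ℂ) ≤ -(‖(k:ℂ)‖ / n) := by
      apply csSup_le (hne.image _)
      rintro x ⟨u, huK, rfl⟩
      dsimp only
      have hre : ((k:ℂ) * u).re = (k:ℝ) * u.re := by simp [Complex.mul_re]
      have hure : u.re ≤ u₀.re := hmax huK
      have hkn : (0:ℝ) ≤ (k:ℝ) := Nat.cast_nonneg k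
      rw [hre, Complex.norm_natCast]
      have : (k:ℝ) * u.re ≤ (k:ℝ) * u₀.re := by nlinarith
      have h3 : (k:ℝ) * u₀.re ≤ -((k:ℝ) / n) := by
        rw [div_le_iff₀ hnR] at h1n
        have := mul_le_mul_of_nonneg_left h1n hkn
        rw [← neg_div, le_div_iff₀ hnR]
        nlinarith
      linarith
    have hexp : (1:ℝ) ≤ Real.exp (-(suppFn K k) - ‖(k:ℂ)‖ / n) := by
      apply Real.one_le_exp
      linarith
    calc ‖f k‖ = ‖f k‖ * 1 := (mul_one _).symm
      _ ≤ ‖f k‖ * Real.exp (-(suppFn K k) - ‖(k:ℂ)‖ / n) :=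
          mul_le_mul_of_nonneg_left hexp (norm_nonneg _)
      _ ≤ M := h1
  obtain ⟨k, hk⟩ := hHC.2 (fun _ => ((M + 2 : ℝ) : ℂ)) (differentiable_const _)
    1 one_pos 1 one_pos
  have h0 : ‖f ((0:ℂ) + k) - ((M + 2 : ℝ) : ℂ)‖ < 1 := hk 0 (by simp)
  rw [zero_add] at h0
  have h4 : ‖((M + 2 : ℝ) : ℂ)‖ - ‖f k‖ ≤ ‖f k - ((M + 2 : ℝ) : ℂ)‖ := by
    have h := norm_sub_norm_le (((M + 2 : ℝ) : ℂ)) (f k)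
    rwa [norm_sub_rev] at h
  have h5 : ‖((M + 2 : ℝ) : ℂ)‖ = M + 2 := by
    rw [Complex.norm_real, Real.norm_of_nonneg (by linarith)]
  linarith [hbound k]
end

section
/- Let K ⊆ {z ∈ ℂ : Re(z) > 0} be a nonempty compact convex set strictly contained in the open right half-plane. Then no function f ∈ Exp(K) is hypercyclic for T₁ on Exp(K). -/
open Filter Complex

lemma suppFn_bddAbove {K : Set ℂ} (hKc : IsCompact K) (z : ℂ) :
    BddAbove ((fun u => (z * u).re) '' K) :=
  (hKc.image (by continuity)).bddAbove

lemma le_suppFn {K : Set ℂ} (hKc : IsCompact K) {u : ℂ} (hu : u ∈ K) (z : ℂ) :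
    (z * u).re ≤ suppFn K z :=
  le_csSup (suppFn_bddAbove hKc z) ⟨u, hu, rfl⟩

lemma suppFn_zero {K : Set ℂ} (hne : K.Nonempty) : suppFn K 0 = 0 := by
  unfold suppFn
  have h : (fun u : ℂ => ((0:ℂ) * u).re) '' K = {0} := by
    have h2 : (fun u : ℂ => ((0:ℂ) * u).re) = fun _ => (0:ℝ) := by funext u; simp
    rw [h2]
    exact Set.Nonempty.image_const hne 0
  rw [h, csSup_singleton]

/-- **Remark 4 (second part).** If `K` is strictly contained in the open right
half-plane, no function of `Exp(K)` is hypercyclic for `T₁` on `Exp(K)`. -/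
theorem stmt11 (K : Set ℂ) (hne : K.Nonempty) (hKc : IsCompact K) (hKconv : Convex ℝ K)
    (hK : K ⊆ {z : ℂ | 0 < z.re})
    (f : ℂ → ℂ) (hf : MemExp K f) : ¬ HCExp K f := by
  rintro ⟨-, hyp⟩
  set a : ℝ := sInf ((fun u : ℂ => u.re) '' K) with ha
  set b : ℝ := sSup ((fun u : ℂ => u.re) '' K) with hb
  have himg : IsCompact ((fun u : ℂ => u.re) '' K) := hKc.image continuous_re
  have hane : ((fun u : ℂ => u.re) '' K).Nonempty := hne.image _
  obtain ⟨u₀, hu₀K, hu₀⟩ := himg.sInf_mem hane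
  have ha0 : 0 < a := by rw [ha, ← hu₀]; exact hK hu₀K
  have hale : ∀ u ∈ K, a ≤ u.re := fun u hu => csInf_le himg.bddBelow ⟨u, hu, rfl⟩
  have hble : ∀ u ∈ K, u.re ≤ b := fun u hu => le_csSup himg.bddAbove ⟨u, hu, rfl⟩
  obtain ⟨n, hn⟩ := exists_nat_gt (1 / a)
  have hnpos : 0 < n := by
    rcases Nat.eq_zero_or_pos n with h | h
    · exfalso; rw [h] at hn; simp at hn
      exact absurd hn (not_lt.mpr (le_of_lt (by positivity)))
    · exact h
  have hnpos' : (0:ℝ) < (n:ℝ) := by exact_mod_cast hnpos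
  have hna : 1 / (n:ℝ) ≤ a := by
    rw [div_le_iff₀ hnpos']
    have h1 : 1 < (n:ℝ) * a := by
      have := (div_lt_iff₀ ha0).mp hn
      linarith
    nlinarith
  -- subadditive shift estimates
  have key_pos : ∀ (k : ℕ) (z : ℂ), suppFn K (z + (k:ℂ)) ≤ suppFn K z + (k:ℝ) * b := by
    intro k z
    apply csSup_le (hne.image _)
    rintro x ⟨u, hu, rfl⟩
    show ((z + (k:ℂ)) * u).re ≤ _
    have h1 : ((z + (k:ℂ)) * u).re = (z * u).re + (k:ℝ) * u.re := by
      simp [add_mul, Complex.add_re, Complex.mul_re]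
    rw [h1]
    have := le_suppFn hKc hu z
    have h2 : (k:ℝ) * u.re ≤ (k:ℝ) * b :=
      mul_le_mul_of_nonneg_left (hble u hu) (Nat.cast_nonneg k)
    linarith
  have key_neg : ∀ (k : ℕ) (z : ℂ), suppFn K (z - (k:ℂ)) ≤ suppFn K z - (k:ℝ) * a := by
    intro k z
    apply csSup_le (hne.image _)
    rintro x ⟨u, hu, rfl⟩
    show ((z - (k:ℂ)) * u).re ≤ _
    have h1 : ((z - (k:ℂ)) * u).re = (z * u).re - (k:ℝ) * u.re := by
      simp [sub_mul, Complex.sub_re, Complex.mul_re]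
    rw [h1]
    have := le_suppFn hKc hu z
    have h2 : (k:ℝ) * a ≤ (k:ℝ) * u.re :=
      mul_le_mul_of_nonneg_left (hale u hu) (Nat.cast_nonneg k)
    linarith
  by_cases hf0 : ∀ z, f z = 0
  · -- f ≡ 0 : cannot approximate g z = exp (u₀ z)
    set g : ℂ → ℂ := fun z => Complex.exp (u₀ * z) with hgdef
    have hg : MemExp K g := by
      constructor
      · exact ((differentiable_const u₀).mul differentiable_id).cexp
      · intro m hm
        refine ⟨1, ?_⟩
        rintro x ⟨z, rfl⟩
        show ‖g z‖ * Real.exp (-(suppFn K z) - ‖z‖ / m) ≤ 1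
        have h1 : ‖g z‖ = Real.exp ((u₀ * z).re) := by
          rw [hgdef]; exact Complex.norm_exp _
        rw [h1, ← Real.exp_add]
        have h2 : (u₀ * z).re ≤ suppFn K z := by
          rw [mul_comm]; exact le_suppFn hKc hu₀K z
        have h3 : (0:ℝ) ≤ ‖z‖ / m := by positivity
        calc Real.exp ((u₀ * z).re + (-(suppFn K z) - ‖z‖ / m)) ≤ Real.exp 0 :=
              Real.exp_le_exp.mpr (by linarith)
          _ = 1 := Real.exp_zero
    obtain ⟨k, hk⟩ := hyp g hg n hnpos (1/2) (by norm_num)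
    have hbdd : BddAbove (Set.range fun z : ℂ =>
        ‖f (z + (k:ℂ)) - g z‖ * Real.exp (-(suppFn K z) - ‖z‖ / n)) := by
      have heq : (fun z : ℂ => ‖f (z + (k:ℂ)) - g z‖ * Real.exp (-(suppFn K z) - ‖z‖ / n))
          = fun z : ℂ => ‖g z‖ * Real.exp (-(suppFn K z) - ‖z‖ / n) := by
        funext z; rw [hf0, zero_sub, norm_neg]
      rw [heq]
      exact hg.2 n hnpos
    have h0 := le_csSup hbdd (Set.mem_range_self (0:ℂ))
    have hval : ‖f ((0:ℂ) + (k:ℂ)) - g 0‖ * Real.exp (-(suppFn K 0) - ‖(0:ℂ)‖ / n) = 1 := by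
      rw [hf0, suppFn_zero hne, hgdef]
      simp
    rw [hval] at h0
    have := lt_of_le_of_lt h0 hk
    norm_num at this
  · push_neg at hf0
    obtain ⟨z₀, hz₀⟩ := hf0
    set c : ℝ := ‖f z₀‖ * Real.exp (-(suppFn K z₀) - ‖z₀‖ / n) with hc
    have hcpos : 0 < c := mul_pos (norm_pos_iff.mpr hz₀) (Real.exp_pos _)
    have hg0 : MemExp K (fun _ : ℂ => (0:ℂ)) := by
      refine ⟨differentiable_const 0, fun m hm => ⟨0, ?_⟩⟩
      rintro x ⟨z, rfl⟩
      simp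
    obtain ⟨k, hk⟩ := hyp _ hg0 n hnpos c hcpos
    have hbdd : BddAbove (Set.range fun z : ℂ =>
        ‖f (z + (k:ℂ)) - (0:ℂ)‖ * Real.exp (-(suppFn K z) - ‖z‖ / n)) := by
      obtain ⟨C, hC⟩ := hf.2 n hnpos
      refine ⟨C * Real.exp ((k:ℝ) * b + (k:ℝ) / n), ?_⟩
      rintro x ⟨z, rfl⟩
      have hCw : ‖f (z + (k:ℂ))‖ * Real.exp (-(suppFn K (z + (k:ℂ))) - ‖z + (k:ℂ)‖ / n) ≤ C :=
        hC (Set.mem_range_self (z + (k:ℂ)))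
      have hH := key_pos k z
      have hnorm : ‖z + (k:ℂ)‖ ≤ ‖z‖ + (k:ℝ) := by
        calc ‖z + (k:ℂ)‖ ≤ ‖z‖ + ‖(k:ℂ)‖ := norm_add_le _ _
          _ = ‖z‖ + (k:ℝ) := by simp
      have hexp : Real.exp (-(suppFn K z) - ‖z‖ / n)
          ≤ Real.exp (-(suppFn K (z + (k:ℂ))) - ‖z + (k:ℂ)‖ / n)
            * Real.exp ((k:ℝ) * b + (k:ℝ) / n) := by
        rw [← Real.exp_add]
        apply Real.exp_le_exp.mpr
        have h4 : ‖z + (k:ℂ)‖ / n ≤ ‖z‖ / n + (k:ℝ) / n := by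
          rw [← add_div]; exact div_le_div_of_nonneg_right hnorm hnpos'.le
        linarith
      calc ‖f (z + (k:ℂ)) - (0:ℂ)‖ * Real.exp (-(suppFn K z) - ‖z‖ / n)
          = ‖f (z + (k:ℂ))‖ * Real.exp (-(suppFn K z) - ‖z‖ / n) := by rw [sub_zero]
        _ ≤ ‖f (z + (k:ℂ))‖ * (Real.exp (-(suppFn K (z + (k:ℂ))) - ‖z + (k:ℂ)‖ / n)
              * Real.exp ((k:ℝ) * b + (k:ℝ) / n)) :=
            mul_le_mul_of_nonneg_left hexp (norm_nonneg _)
        _ = (‖f (z + (k:ℂ))‖ * Real.exp (-(suppFn K (z + (k:ℂ))) - ‖z + (k:ℂ)‖ / n))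
              * Real.exp ((k:ℝ) * b + (k:ℝ) / n) := by ring
        _ ≤ C * Real.exp ((k:ℝ) * b + (k:ℝ) / n) :=
            mul_le_mul_of_nonneg_right hCw (Real.exp_pos _).le
    have h0 := le_csSup hbdd (Set.mem_range_self (z₀ - (k:ℂ)))
    have hsimp : z₀ - (k:ℂ) + (k:ℂ) = z₀ := by ring
    rw [hsimp, sub_zero] at h0
    have hle : c ≤ ‖f z₀‖ * Real.exp (-(suppFn K (z₀ - (k:ℂ))) - ‖z₀ - (k:ℂ)‖ / n) := by
      rw [hc]
      apply mul_le_mul_of_nonneg_left _ (norm_nonneg _)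
      apply Real.exp_le_exp.mpr
      have hH := key_neg k z₀
      have hnorm : ‖z₀ - (k:ℂ)‖ ≤ ‖z₀‖ + (k:ℝ) := by
        calc ‖z₀ - (k:ℂ)‖ ≤ ‖z₀‖ + ‖(k:ℂ)‖ := norm_sub_le _ _
          _ = ‖z₀‖ + (k:ℝ) := by simp
      have h4 : ‖z₀ - (k:ℂ)‖ / n ≤ ‖z₀‖ / n + (k:ℝ) / n := by
        rw [← add_div]; exact div_le_div_of_nonneg_right hnorm hnpos'.le
      have h5 : (k:ℝ) / n ≤ (k:ℝ) * a := by
        rw [div_eq_mul_one_div]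
        exact mul_le_mul_of_nonneg_left hna (Nat.cast_nonneg k)
      linarith
    have := lt_of_le_of_lt (le_trans hle h0) hk
    exact lt_irrefl c this
end

section
/- Let K ⊆ ℂ be a nonempty compact convex set. If f ∈ Exp(K) is frequently hypercyclic for T₁ on Exp(K), then f is frequently hypercyclic for T₁ on H(ℂ). -/
open Filter Complex

open scoped Classical in
lemma myLowerDensity_mono {A B : Set ℕ} (h : A ⊆ B) : lowerDensity A ≤ lowerDensity B := by
  unfold lowerDensity
  have hcard : ∀ N : ℕ, (((Finset.range (N + 1)).filter (fun n => n ∈ A)).card : ℝ)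
      ≤ (((Finset.range (N + 1)).filter (fun n => n ∈ B)).card : ℝ) := by
    intro N
    have : ((Finset.range (N + 1)).filter (fun n => n ∈ A))
        ⊆ ((Finset.range (N + 1)).filter (fun n => n ∈ B)) := by
      intro x hx
      simp only [Finset.mem_filter] at hx ⊢
      exact ⟨hx.1, h hx.2⟩
    exact_mod_cast Finset.card_le_card this
  apply Filter.liminf_le_liminf
  · refine Filter.Eventually.of_forall fun N => ?_
    rcases Nat.eq_zero_or_pos N with hN | hN
    · subst hN; simp
    · have hN' : (0:ℝ) < N := by exact_mod_cast hN
      exact div_le_div_of_nonneg_right (hcard N) hN'.le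
  · refine ⟨0, ?_⟩
    rw [Filter.eventually_map]
    refine Filter.Eventually.of_forall fun N => ?_
    positivity
  · apply Filter.IsBoundedUnder.isCoboundedUnder_ge
    refine ⟨2, ?_⟩
    rw [Filter.eventually_map]
    filter_upwards [Filter.eventually_ge_atTop 1] with N hN
    have hN' : (1:ℝ) ≤ N := by exact_mod_cast hN
    have h1 : (((Finset.range (N + 1)).filter (fun n => n ∈ B)).card : ℝ) ≤ (N:ℝ) + 1 := by
      have := Finset.card_filter_le (Finset.range (N+1)) (fun n => n ∈ B)
      have h2 : ((Finset.range (N+1)).card : ℝ) = (N:ℝ) + 1 := by simp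
      calc (((Finset.range (N + 1)).filter (fun n => n ∈ B)).card : ℝ)
          ≤ ((Finset.range (N+1)).card : ℝ) := by exact_mod_cast this
        _ = (N:ℝ) + 1 := h2
    rw [div_le_iff₀ (by linarith)]
    linarith

lemma myPowExp (x : ℝ) (hx : 0 ≤ x) (k n : ℕ) (hn : 0 < n) :
    x ^ k * Real.exp (-(x / n)) ≤ (k.factorial : ℝ) * (n:ℝ) ^ k := by
  have hn' : (0:ℝ) < n := by exact_mod_cast hn
  have ht : 0 ≤ x / n := by positivity
  have h1 : (x / n) ^ k / (k.factorial : ℝ) ≤ Real.exp (x / n) := by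
    calc (x / n) ^ k / (k.factorial : ℝ)
        ≤ ∑ i ∈ Finset.range (k+1), (x / n) ^ i / (i.factorial : ℝ) :=
          Finset.single_le_sum (f := fun i => (x / n) ^ i / (i.factorial : ℝ))
            (fun i _ => by positivity) (Finset.self_mem_range_succ k)
      _ ≤ Real.exp (x / n) := Real.sum_le_exp_of_nonneg ht _
  have h1' : (x / n) ^ k ≤ (k.factorial : ℝ) * Real.exp (x / n) := by
    rw [div_le_iff₀ (by positivity : (0:ℝ) < (k.factorial : ℝ))] at h1
    linarith [h1]
  have h2 : (x / n) ^ k * (Real.exp (x / n))⁻¹ ≤ (k.factorial : ℝ) := by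
    have hep : (0:ℝ) < Real.exp (x / n) := Real.exp_pos _
    calc (x / n) ^ k * (Real.exp (x / n))⁻¹
        ≤ ((k.factorial : ℝ) * Real.exp (x / n)) * (Real.exp (x / n))⁻¹ :=
          mul_le_mul_of_nonneg_right h1' (by positivity)
      _ = (k.factorial : ℝ) := by field_simp
  calc x ^ k * Real.exp (-(x / n))
      = ((x / n) ^ k * (Real.exp (x / n))⁻¹) * (n:ℝ) ^ k := by
        rw [Real.exp_neg, div_pow]
        field_simp
    _ ≤ (k.factorial : ℝ) * (n:ℝ) ^ k :=
        mul_le_mul_of_nonneg_right h2 (by positivity)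

/-- Frequent hypercyclicity for `T₁` on `Exp(K)` implies frequent hypercyclicity for
`T₁` on `H(ℂ)`. -/
theorem stmt15 (K : Set ℂ) (hne : K.Nonempty) (hKc : IsCompact K) (hKconv : Convex ℝ K)
    (f : ℂ → ℂ) (hf : FHCExp K f) : FHCEnt f := by
  classical
  obtain ⟨u₀, hu₀⟩ := hne
  obtain ⟨C₀, hC₀⟩ := isBounded_iff_forall_norm_le.1 hKc.isBounded
  set C := max C₀ 0 with hCdef
  have hC : ∀ u ∈ K, ‖u‖ ≤ C := fun u hu => (hC₀ u hu).trans (le_max_left _ _)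
  have hCnn : (0:ℝ) ≤ C := le_max_right _ _
  have hre : ∀ (z u : ℂ), u ∈ K → (z * u).re ≤ ‖z‖ * C := by
    intro z u hu
    calc (z * u).re ≤ ‖z * u‖ := Complex.re_le_norm _
      _ = ‖z‖ * ‖u‖ := norm_mul _ _
      _ ≤ ‖z‖ * C := mul_le_mul_of_nonneg_left (hC u hu) (norm_nonneg z)
  have hbddIm : ∀ z : ℂ, BddAbove ((fun u => (z * u).re) '' K) := by
    intro z
    refine ⟨‖z‖ * C, ?_⟩
    rintro x ⟨u, hu, rfl⟩
    exact hre z u hu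
  have hsupp_ge : ∀ z : ℂ, (z * u₀).re ≤ suppFn K z := fun z =>
    le_csSup (hbddIm z) ⟨u₀, hu₀, rfl⟩
  have hKne : K.Nonempty := ⟨u₀, hu₀⟩
  have hsupp_le : ∀ z : ℂ, suppFn K z ≤ ‖z‖ * C := by
    intro z
    refine csSup_le (hKne.image _) ?_
    rintro x ⟨u, hu, rfl⟩
    exact hre z u hu
  have hsupp_lip : ∀ z w : ℂ, suppFn K z ≤ suppFn K w + ‖z - w‖ * C := by
    intro z w
    refine csSup_le (hKne.image _) ?_
    rintro x ⟨u, hu, rfl⟩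
    have h1 : (w * u).re ≤ suppFn K w := le_csSup (hbddIm w) ⟨u, hu, rfl⟩
    have h2 : ((z - w) * u).re ≤ ‖z - w‖ * C := hre (z - w) u hu
    have h3 : (z * u).re = (w * u).re + ((z - w) * u).re := by
      rw [← Complex.add_re]
      congr 1
      ring
    linarith
  -- Part 2: construct the approximating function in Exp(K)
  refine ⟨hf.1.1, ?_⟩
  intro g hg R hR ε hε
  set φ : ℂ → ℂ := fun z => g z * Complex.exp (-(u₀ * z)) with hφdef
  have hφd : Differentiable ℂ φ :=
    hg.mul (((differentiable_const u₀).mul differentiable_id).neg.cexp)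
  set RN : NNReal := R.toNNReal + 2 with hRN
  have hRNpos : 0 < RN := by
    have h2 : (0:NNReal) < 2 := by norm_num
    exact lt_of_lt_of_le h2 le_add_self
  have hps : HasFPowerSeriesOnBall φ (cauchyPowerSeries φ 0 RN) 0 RN :=
    (hφd.differentiableOn).hasFPowerSeriesOnBall hRNpos
  set p := cauchyPowerSeries φ 0 RN with hp
  have hlt : ((R.toNNReal + 1 : NNReal) : ENNReal) < (RN : ENNReal) := by
    rw [ENNReal.coe_lt_coe, hRN]
    exact add_lt_add_right one_lt_two _
  have htu := hps.tendstoUniformlyOn hlt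
  rw [Metric.tendstoUniformlyOn_iff] at htu
  set ε₁ := ε / (2 * Real.exp (C * R)) with hε₁
  have hε₁pos : 0 < ε₁ := by positivity
  obtain ⟨m, hm⟩ := (htu ε₁ hε₁pos).exists
  have happrox : ∀ z : ℂ, ‖z‖ ≤ R → ‖φ z - p.partialSum m z‖ < ε₁ := by
    intro z hz
    have hz' : z ∈ Metric.ball (0:ℂ) (R.toNNReal + 1 : NNReal) := by
      rw [Metric.mem_ball, dist_zero_right]
      have : ((R.toNNReal + 1 : NNReal) : ℝ) = R + 1 := by
        rw [NNReal.coe_add, Real.coe_toNNReal R hR.le, NNReal.coe_one]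
      rw [this]
      linarith
    have := hm z hz'
    rw [zero_add, dist_eq_norm] at this
    exact this
  set a : ℕ → ℂ := fun k => p k (fun _ => 1) with ha
  have hQ : ∀ z : ℂ, p.partialSum m z = ∑ k ∈ Finset.range m, a k * z ^ k := by
    intro z
    unfold FormalMultilinearSeries.partialSum
    refine Finset.sum_congr rfl fun k _ => ?_
    have hz1 : (fun _ : Fin k => z) = fun _ : Fin k => z • (1:ℂ) := by
      funext i; simp
    rw [hz1, (p k).map_smul_univ (fun _ : Fin k => z) (fun _ => 1)]
    simp only [Finset.prod_const, Finset.card_univ, Fintype.card_fin, smul_eq_mul]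
    exact mul_comm _ _
  set P : ℂ → ℂ := fun z => (∑ k ∈ Finset.range m, a k * z ^ k) * Complex.exp (u₀ * z)
    with hPdef
  have hgh : ∀ z : ℂ, ‖z‖ ≤ R → ‖P z - g z‖ < ε / 2 := by
    intro z hz
    have e1 : P z - g z = (p.partialSum m z - φ z) * Complex.exp (u₀ * z) := by
      simp only [hPdef, hφdef, ← hQ z]
      rw [sub_mul, mul_assoc, ← Complex.exp_add, neg_add_cancel, Complex.exp_zero, mul_one]
    have e2 : ‖Complex.exp (u₀ * z)‖ ≤ Real.exp (C * R) := by
      rw [Complex.norm_exp]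
      apply Real.exp_le_exp.2
      calc (u₀ * z).re ≤ ‖u₀ * z‖ := Complex.re_le_norm _
        _ = ‖u₀‖ * ‖z‖ := norm_mul _ _
        _ ≤ C * R := mul_le_mul (hC u₀ hu₀) hz (norm_nonneg z) hCnn
    have e3 : ‖p.partialSum m z - φ z‖ < ε₁ := by
      rw [norm_sub_rev]; exact happrox z hz
    have e4 : ε₁ * Real.exp (C * R) = ε / 2 := by
      rw [hε₁]
      field_simp
    calc ‖P z - g z‖ = ‖p.partialSum m z - φ z‖ * ‖Complex.exp (u₀ * z)‖ := by
          rw [e1, norm_mul]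
      _ ≤ ‖p.partialSum m z - φ z‖ * Real.exp (C * R) :=
          mul_le_mul_of_nonneg_left e2 (norm_nonneg _)
      _ < ε₁ * Real.exp (C * R) :=
          mul_lt_mul_of_pos_right e3 (Real.exp_pos _)
      _ = ε / 2 := e4
  -- Part 3: P ∈ Exp(K)
  have hPbound : ∀ n : ℕ, 0 < n → ∀ z : ℂ,
      ‖P z‖ * Real.exp (-(suppFn K z) - ‖z‖ / n)
        ≤ ∑ k ∈ Finset.range m, ‖a k‖ * ((k.factorial : ℝ) * (n:ℝ) ^ k) := by
    intro n hn z
    have hsum_nonneg : (0:ℝ) ≤ ∑ k ∈ Finset.range m, ‖a k‖ * ‖z‖ ^ k :=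
      Finset.sum_nonneg fun k _ => by positivity
    have hb1 : ‖P z‖ ≤ (∑ k ∈ Finset.range m, ‖a k‖ * ‖z‖ ^ k) * Real.exp ((z * u₀).re) := by
      rw [hPdef]
      simp only
      rw [norm_mul, Complex.norm_exp]
      have hr : (u₀ * z).re = (z * u₀).re := by rw [mul_comm]
      rw [hr]
      apply mul_le_mul_of_nonneg_right ?_ (Real.exp_pos _).le
      calc ‖∑ k ∈ Finset.range m, a k * z ^ k‖ ≤ ∑ k ∈ Finset.range m, ‖a k * z ^ k‖ :=
            norm_sum_le _ _
        _ = ∑ k ∈ Finset.range m, ‖a k‖ * ‖z‖ ^ k := by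
            refine Finset.sum_congr rfl fun k _ => ?_
            rw [norm_mul, norm_pow]
    calc ‖P z‖ * Real.exp (-(suppFn K z) - ‖z‖ / n)
        ≤ ((∑ k ∈ Finset.range m, ‖a k‖ * ‖z‖ ^ k) * Real.exp ((z * u₀).re)) *
            Real.exp (-(suppFn K z) - ‖z‖ / n) :=
          mul_le_mul_of_nonneg_right hb1 (Real.exp_pos _).le
      _ = (∑ k ∈ Finset.range m, ‖a k‖ * ‖z‖ ^ k) *
            Real.exp ((z * u₀).re + (-(suppFn K z) - ‖z‖ / n)) := by
          rw [mul_assoc, ← Real.exp_add]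
      _ ≤ (∑ k ∈ Finset.range m, ‖a k‖ * ‖z‖ ^ k) * Real.exp (-(‖z‖ / n)) := by
          apply mul_le_mul_of_nonneg_left (Real.exp_le_exp.2 ?_) hsum_nonneg
          have := hsupp_ge z
          linarith
      _ = ∑ k ∈ Finset.range m, ‖a k‖ * (‖z‖ ^ k * Real.exp (-(‖z‖ / n))) := by
          rw [Finset.sum_mul]
          exact Finset.sum_congr rfl fun k _ => by ring
      _ ≤ ∑ k ∈ Finset.range m, ‖a k‖ * ((k.factorial : ℝ) * (n:ℝ) ^ k) :=
          Finset.sum_le_sum fun k _ => mul_le_mul_of_nonneg_left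
            (myPowExp ‖z‖ (norm_nonneg z) k n hn) (norm_nonneg _)
  have hPd : Differentiable ℂ P := by
    rw [hPdef]
    apply Differentiable.mul
    · exact Differentiable.fun_sum fun k _ => (differentiable_const (a k)).fun_mul (differentiable_pow k)
    · exact ((differentiable_const u₀).mul differentiable_id).cexp
  have hPm : MemExp K P := by
    refine ⟨hPd, fun n hn => ?_⟩
    refine ⟨∑ k ∈ Finset.range m, ‖a k‖ * ((k.factorial : ℝ) * (n:ℝ) ^ k), ?_⟩
    rintro x ⟨z, rfl⟩
    exact hPbound n hn z
  -- Part 4: the bounds for translates of f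
  obtain ⟨B, hB⟩ := hf.1.2 1 one_pos
  have hB' : ∀ z : ℂ, ‖f z‖ * Real.exp (-(suppFn K z) - ‖z‖ / ((1:ℕ):ℝ)) ≤ B :=
    fun z => hB ⟨z, rfl⟩
  have hfb : ∀ k : ℕ, BddAbove (Set.range fun z : ℂ =>
      ‖f (z + (k:ℂ)) - P z‖ * Real.exp (-(suppFn K z) - ‖z‖ / ((1:ℕ):ℝ))) := by
    intro k
    refine ⟨B * Real.exp (C * k + k) +
      ∑ j ∈ Finset.range m, ‖a j‖ * ((j.factorial : ℝ) * ((1:ℕ):ℝ) ^ j), ?_⟩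
    rintro x ⟨z, rfl⟩
    have hknorm : ‖(k:ℂ)‖ = (k:ℝ) := by
      rw [Complex.norm_natCast]
    have h1 : ‖f (z + (k:ℂ))‖ * Real.exp (-(suppFn K z) - ‖z‖ / ((1:ℕ):ℝ))
        ≤ B * Real.exp (C * k + k) := by
      have e : ‖f (z + (k:ℂ))‖ * Real.exp (-(suppFn K z) - ‖z‖ / ((1:ℕ):ℝ))
          = (‖f (z + (k:ℂ))‖ * Real.exp (-(suppFn K (z + k)) - ‖z + (k:ℂ)‖ / ((1:ℕ):ℝ))) *
            Real.exp ((suppFn K (z + k) - suppFn K z) +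
              (‖z + (k:ℂ)‖ - ‖z‖) / ((1:ℕ):ℝ)) := by
        rw [mul_assoc, ← Real.exp_add]
        congr 1
        push_cast
        ring
      rw [e]
      have hBnn : 0 ≤ B := le_trans (by positivity) (hB' 0)
      have hexp : (suppFn K (z + k) - suppFn K z) + (‖z + (k:ℂ)‖ - ‖z‖) / ((1:ℕ):ℝ)
          ≤ C * k + k := by
        have l1 : suppFn K (z + k) ≤ suppFn K z + ‖(z + (k:ℂ)) - z‖ * C := hsupp_lip (z + k) z
        have l2 : ‖(z + (k:ℂ)) - z‖ = (k:ℝ) := by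
          rw [add_sub_cancel_left, hknorm]
        have l3 : ‖z + (k:ℂ)‖ ≤ ‖z‖ + (k:ℝ) := by
          calc ‖z + (k:ℂ)‖ ≤ ‖z‖ + ‖(k:ℂ)‖ := norm_add_le _ _
            _ = ‖z‖ + (k:ℝ) := by rw [hknorm]
        rw [l2] at l1
        push_cast
        rw [div_one]
        nlinarith
      exact mul_le_mul (hB' (z + k)) (Real.exp_le_exp.2 hexp) (Real.exp_pos _).le hBnn
    have h2 := hPbound 1 one_pos z
    calc ‖f (z + (k:ℂ)) - P z‖ * Real.exp (-(suppFn K z) - ‖z‖ / ((1:ℕ):ℝ))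
        ≤ (‖f (z + (k:ℂ))‖ + ‖P z‖) * Real.exp (-(suppFn K z) - ‖z‖ / ((1:ℕ):ℝ)) :=
          mul_le_mul_of_nonneg_right (norm_sub_le _ _) (Real.exp_pos _).le
      _ = ‖f (z + (k:ℂ))‖ * Real.exp (-(suppFn K z) - ‖z‖ / ((1:ℕ):ℝ)) +
          ‖P z‖ * Real.exp (-(suppFn K z) - ‖z‖ / ((1:ℕ):ℝ)) := add_mul _ _ _
      _ ≤ B * Real.exp (C * k + k) +
          ∑ j ∈ Finset.range m, ‖a j‖ * ((j.factorial : ℝ) * ((1:ℕ):ℝ) ^ j) :=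
          add_le_add h1 h2
  -- Part 5: conclusion
  set δ := ε / (2 * Real.exp (C * R + R)) with hδ
  have hδpos : 0 < δ := by positivity
  have hmain := hf.2 P hPm 1 one_pos δ hδpos
  refine lt_of_lt_of_le hmain (myLowerDensity_mono ?_)
  intro k hk
  simp only [Set.mem_setOf_eq] at hk ⊢
  intro z hz
  have hpt : ‖f (z + (k:ℂ)) - P z‖ * Real.exp (-(suppFn K z) - ‖z‖ / ((1:ℕ):ℝ)) < δ :=
    lt_of_le_of_lt (le_csSup (hfb k) ⟨z, rfl⟩) hk
  have h3 : ‖f (z + (k:ℂ)) - P z‖ < δ * Real.exp (suppFn K z + ‖z‖ / ((1:ℕ):ℝ)) := by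
    have := mul_lt_mul_of_pos_right hpt (Real.exp_pos (suppFn K z + ‖z‖ / ((1:ℕ):ℝ)))
    rwa [mul_assoc, ← Real.exp_add,
      (by ring : -(suppFn K z) - ‖z‖ / ((1:ℕ):ℝ) + (suppFn K z + ‖z‖ / ((1:ℕ):ℝ)) = 0),
      Real.exp_zero, mul_one] at this
  have h4 : δ * Real.exp (suppFn K z + ‖z‖ / ((1:ℕ):ℝ)) ≤ δ * Real.exp (C * R + R) := by
    apply mul_le_mul_of_nonneg_left (Real.exp_le_exp.2 ?_) hδpos.le
    have l1 := hsupp_le z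
    have l2 : ‖z‖ * C ≤ R * C := mul_le_mul_of_nonneg_right hz hCnn
    push_cast
    rw [div_one]
    nlinarith
  have h5 : δ * Real.exp (C * R + R) = ε / 2 := by
    rw [hδ]
    field_simp
  have h6 : ‖f (z + (k:ℂ)) - g z‖ ≤ ‖f (z + (k:ℂ)) - P z‖ + ‖P z - g z‖ := by
    calc ‖f (z + (k:ℂ)) - g z‖ = ‖(f (z + (k:ℂ)) - P z) + (P z - g z)‖ := by rw [sub_add_sub_cancel]
      _ ≤ ‖f (z + (k:ℂ)) - P z‖ + ‖P z - g z‖ := norm_add_le _ _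
  have h7 := hgh z hz
  linarith
end
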